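/- arXiv:1803.04484 — 3 statements merged into one kernel-verified Lean document; each statement's English description precedes it below -/
import Mathlib

section
/- Let s be a SRSWOR of size n from {1,…,N} with 2 ≤ n ≤ N, and let x̄_s = (1/n)∑_{j∈s} x_j. Then the sample variance is unbiased for the population variance: E[ (1/(n−1)) ∑_{j∈s} (x_j − x̄_s)² ] = S²_x. -/
open MeasureTheory ProbabilityTheory Finset
open scoped ENNReal

lemma srswor_choose_id {N n : ℕ} (hN : 2 ≤ N) (hn : 2 ≤ n) :
    N * (N - 1) * (N - 2).choose (n - 2) = N.choose n * (n * (n - 1)) := by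
  obtain ⟨N', rfl⟩ := Nat.exists_eq_add_of_le hN
  obtain ⟨n', rfl⟩ := Nat.exists_eq_add_of_le hn
  simp only [Nat.add_sub_cancel_left, show 2 + N' - 1 = N' + 1 by omega,
    show 2 + n' - 1 = n' + 1 by omega]
  have h1 := Nat.add_one_mul_choose_eq N' n'
  have h2 := Nat.add_one_mul_choose_eq (N' + 1) (n' + 1)
  have e1 : 2 + N' = N' + 2 := by omega
  have e2 : 2 + n' = n' + 2 := by omega
  rw [e1, e2]
  nlinarith [h1, h2]

lemma srswor_var_pairs {N : ℕ} (x : Fin N → ℝ) (t : Finset (Fin N)) {n : ℕ} (hc : t.card = n)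
    (hn0 : (n : ℝ) ≠ 0) :
    ∑ j ∈ t, (x j - (∑ i ∈ t, x i) / (n : ℝ)) ^ 2
      = (∑ i ∈ t, ∑ j ∈ t, (x i - x j) ^ 2) / (2 * n) := by
  set P := ∑ i ∈ t, x i with hP
  set Q := ∑ i ∈ t, (x i) ^ 2 with hQ
  have key : ∀ c : ℝ, ∑ j ∈ t, (x j - c) ^ 2 = Q - 2 * c * P + n * c ^ 2 := by
    intro c
    have : ∀ j ∈ t, (x j - c) ^ 2 = (x j) ^ 2 - 2 * c * (x j) + c ^ 2 := fun j _ => by ring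
    rw [Finset.sum_congr rfl this, Finset.sum_add_distrib, Finset.sum_sub_distrib,
      ← Finset.mul_sum, Finset.sum_const, hc, nsmul_eq_mul]
  have h2 : ∑ i ∈ t, ∑ j ∈ t, (x i - x j) ^ 2 = n * Q - 2 * P * P + n * Q := by
    have inner : ∀ i ∈ t, ∑ j ∈ t, (x i - x j) ^ 2 = n * (x i) ^ 2 - 2 * (x i) * P + Q := by
      intro i _
      have : ∀ j ∈ t, (x i - x j) ^ 2 = (x j) ^ 2 - 2 * (x i) * (x j) + (x i) ^ 2 := fun j _ => by ring
      rw [Finset.sum_congr rfl this, Finset.sum_add_distrib, Finset.sum_sub_distrib,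
        ← Finset.mul_sum, Finset.sum_const, hc, nsmul_eq_mul]
      ring
    rw [Finset.sum_congr rfl inner, Finset.sum_add_distrib, Finset.sum_sub_distrib,
      ← Finset.mul_sum, Finset.sum_const, hc, nsmul_eq_mul, ← hQ]
    have : ∑ i ∈ t, 2 * x i * P = 2 * P * P := by
      rw [← Finset.sum_mul, ← Finset.mul_sum, ← hP]
    rw [this]
  rw [key, h2]
  field_simp
  ring

lemma srswor_pair_count {N n : ℕ} (hn : 2 ≤ n) {i j : Fin N} (hij : i ≠ j) :
    ((powersetCard n (univ : Finset (Fin N))).filter (fun t => i ∈ t ∧ j ∈ t)).card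
      = (N - 2).choose (n - 2) := by
  have hcard2 : ({i, j} : Finset (Fin N)).card = 2 := by
    rw [card_insert_of_notMem (by simpa using hij), card_singleton]
  have h := Finset.card_bij'
    (s := (powersetCard n (univ : Finset (Fin N))).filter (fun t => i ∈ t ∧ j ∈ t))
    (t := powersetCard (n - 2) ((univ : Finset (Fin N)) \ {i, j}))
    (fun t _ => t \ {i, j}) (fun s _ => s ∪ {i, j}) ?_ ?_ ?_ ?_
  · rw [h, card_powersetCard, card_sdiff_of_subset (subset_univ _), card_univ, Fintype.card_fin, hcard2]
  · intro t ht
    rw [mem_filter, mem_powersetCard] at ht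
    obtain ⟨⟨_, hcard⟩, hi, hj'⟩ := ht
    rw [mem_powersetCard]
    constructor
    · intro a ha
      rw [mem_sdiff] at ha ⊢
      exact ⟨mem_univ _, ha.2⟩
    · rw [card_sdiff_of_subset (by intro a ha; simp at ha; rcases ha with rfl | rfl <;> assumption),
        hcard, hcard2]
  · intro s hs
    rw [mem_powersetCard] at hs
    obtain ⟨hsub, hcard⟩ := hs
    have hdisj : Disjoint s ({i, j} : Finset (Fin N)) := by
      refine disjoint_left.2 fun a ha hab => ?_
      have := hsub ha
      rw [mem_sdiff] at this
      exact this.2 hab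
    rw [mem_filter, mem_powersetCard]
    refine ⟨⟨subset_univ _, ?_⟩, ?_, ?_⟩
    · rw [card_union_of_disjoint hdisj, hcard, hcard2]
      omega
    · exact mem_union_right _ (by simp)
    · exact mem_union_right _ (by simp)
  · intro t ht
    rw [mem_filter] at ht
    obtain ⟨_, hi, hj'⟩ := ht
    ext a
    simp only [mem_union, mem_sdiff, mem_insert, mem_singleton]
    constructor
    · rintro (⟨ha, _⟩ | (rfl | rfl)) <;> first | exact ha | exact hi | exact hj'
    · intro ha
      by_cases h' : a = i ∨ a = j
      · right; exact h'
      · left; exact ⟨ha, by simpa using h'⟩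
  · intro s hs
    rw [mem_powersetCard] at hs
    ext a
    simp only [mem_sdiff, mem_union, mem_insert, mem_singleton]
    constructor
    · rintro ⟨h1 | h1, h2⟩
      · exact h1
      · exact absurd h1 h2
    · intro ha
      have := hs.1 ha
      rw [mem_sdiff] at this
      exact ⟨Or.inl ha, by simpa using this.2⟩

lemma srswor_sum_pairs_swap {N n : ℕ} (hn : 2 ≤ n) (x : Fin N → ℝ) :
    ∑ t ∈ powersetCard n (univ : Finset (Fin N)), ∑ i ∈ t, ∑ j ∈ t, (x i - x j) ^ 2
      = ((N - 2).choose (n - 2) : ℝ) * ∑ i, ∑ j, (x i - x j) ^ 2 := by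
  have step1 : ∀ t : Finset (Fin N), ∑ i ∈ t, ∑ j ∈ t, (x i - x j) ^ 2
      = ∑ i : Fin N, ∑ j : Fin N, if i ∈ t ∧ j ∈ t then (x i - x j) ^ 2 else 0 := by
    intro t
    simp only [ite_and]
    have inner : ∀ i : Fin N,
        (∑ j : Fin N, if i ∈ t then if j ∈ t then (x i - x j) ^ 2 else 0 else 0)
          = if i ∈ t then ∑ j ∈ t, (x i - x j) ^ 2 else 0 := by
      intro i
      by_cases hi : i ∈ t <;> simp [hi, Finset.sum_ite_mem]
    rw [Finset.sum_congr rfl fun i _ => inner i, Finset.sum_ite_mem, univ_inter]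
  rw [Finset.sum_congr rfl fun t _ => step1 t, Finset.sum_comm]
  rw [Finset.sum_congr rfl fun i _ => Finset.sum_comm]
  rw [Finset.mul_sum]
  refine Finset.sum_congr rfl fun i _ => ?_
  rw [Finset.mul_sum]
  refine Finset.sum_congr rfl fun j _ => ?_
  rw [← Finset.sum_filter, Finset.sum_const, nsmul_eq_mul]
  by_cases hij : i = j
  · subst hij; simp
  · rw [srswor_pair_count hn hij]

/-- **Unbiasedness of the sample variance under SRSWOR.**
If `S` is a simple random sample without replacement of size `n` (with `2 ≤ n ≤ N`)
from a population of `N ≥ 2` units, then the sample variance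
`(1/(n−1)) ∑_{j∈S} (x_j − x̄_S)²` is unbiased for the population variance `S²_x`. -/
theorem srswor_sample_variance_unbiased
    {Ω : Type*} [MeasurableSpace Ω] (μ : Measure Ω) [IsProbabilityMeasure μ]
    (N n : ℕ) (hN : 2 ≤ N) (hn : 2 ≤ n) (hnN : n ≤ N)
    (x : Fin N → ℝ) (S : Ω → Finset (Fin N))
    (hSmeas : ∀ t : Finset (Fin N), MeasurableSet {ω | S ω = t})
    (hSunif : ∀ t : Finset (Fin N), t.card = n →
      μ {ω | S ω = t} = (N.choose n : ℝ≥0∞)⁻¹) :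
    ∫ ω, (∑ j ∈ S ω, (x j - (∑ i ∈ S ω, x i) / (n : ℝ)) ^ 2) / ((n : ℝ) - 1) ∂μ =
      (∑ j, (x j - (∑ i, x i) / (N : ℝ)) ^ 2) / ((N : ℝ) - 1) := by
  have hn0 : (n : ℝ) ≠ 0 := by positivity
  have hn1 : (n : ℝ) - 1 ≠ 0 := by
    have : (2 : ℝ) ≤ n := by exact_mod_cast hn
    linarith
  have hN0 : (N : ℝ) ≠ 0 := by positivity
  have hN1 : (N : ℝ) - 1 ≠ 0 := by
    have : (2 : ℝ) ≤ N := by exact_mod_cast hN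
    linarith
  have hC0 : (N.choose n : ℝ) ≠ 0 := by
    exact_mod_cast (Nat.choose_pos hnN).ne'
  set f : Finset (Fin N) → ℝ :=
    fun t => (∑ j ∈ t, (x j - (∑ i ∈ t, x i) / (n : ℝ)) ^ 2) / ((n : ℝ) - 1) with hf
  -- Step B: integral as finite sum
  have hint : ∫ ω, f (S ω) ∂μ
      = ∑ t : Finset (Fin N), (μ {ω | S ω = t}).toReal • f t := by
    have hfun : (fun ω => f (S ω))
        = fun ω => ∑ t : Finset (Fin N),
            Set.indicator {ω' | S ω' = t} (fun _ => f t) ω := by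
      funext ω
      rw [Finset.sum_eq_single_of_mem (S ω) (Finset.mem_univ _)]
      · simp [Set.indicator_apply]
      · intro t _ ht
        exact Set.indicator_of_notMem (fun h => ht (Set.mem_setOf_eq ▸ h).symm) _
    rw [hfun, MeasureTheory.integral_finset_sum _
      (fun t _ => (MeasureTheory.integrable_const (f t)).indicator (hSmeas t))]
    exact Finset.sum_congr rfl fun t _ =>
      MeasureTheory.integral_indicator_const (f t) (hSmeas t)
  -- total measure
  have htot : ∑ t : Finset (Fin N), μ {ω | S ω = t} = 1 := by
    have hdisj : Pairwise (Function.onFun Disjoint fun t : Finset (Fin N) => {ω | S ω = t}) := by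
      intro t t' htt'
      refine Set.disjoint_left.2 fun ω h1 h2 => htt' ?_
      exact h1.symm.trans h2
    have hU : (⋃ t : Finset (Fin N), {ω | S ω = t}) = Set.univ := by
      ext ω
      simp only [Set.mem_iUnion, Set.mem_setOf_eq, Set.mem_univ, iff_true]
      exact ⟨S ω, rfl⟩
    calc ∑ t : Finset (Fin N), μ {ω | S ω = t}
        = ∑' t : Finset (Fin N), μ {ω | S ω = t} := (tsum_fintype _).symm
      _ = μ (⋃ t : Finset (Fin N), {ω | S ω = t}) :=
          (measure_iUnion hdisj fun t => hSmeas t).symm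
      _ = 1 := by rw [hU]; exact measure_univ
  have hfilter_eq : (univ : Finset (Finset (Fin N))).filter (fun t => t.card = n)
      = powersetCard n univ := by
    rw [powersetCard_eq_filter, powerset_univ]
  have hchoosecard : (powersetCard n (univ : Finset (Fin N))).card = N.choose n := by
    rw [card_powersetCard, card_univ, Fintype.card_fin]
  have hone : ∑ t ∈ powersetCard n (univ : Finset (Fin N)), μ {ω | S ω = t} = 1 := by
    rw [Finset.sum_congr rfl (fun t ht => hSunif t (mem_powersetCard.1 ht).2),
      Finset.sum_const, hchoosecard, nsmul_eq_mul]
    exact ENNReal.mul_inv_cancel (by exact_mod_cast (Nat.choose_pos hnN).ne') (by simp)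
  have hzero : ∀ t : Finset (Fin N), ¬ t.card = n → μ {ω | S ω = t} = 0 := by
    have hsplit := Finset.sum_filter_add_sum_filter_not (univ : Finset (Finset (Fin N)))
      (fun t => t.card = n) (fun t => μ {ω | S ω = t})
    rw [hfilter_eq, hone, htot] at hsplit
    have hrest : ∑ t ∈ (univ : Finset (Finset (Fin N))).filter (fun t => ¬ t.card = n),
        μ {ω | S ω = t} = 0 :=
      (ENNReal.add_right_inj ENNReal.one_ne_top).1 (by rw [add_zero]; exact hsplit)
    intro t ht
    exact (Finset.sum_eq_zero_iff.1 hrest) t (by simp [ht])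
  -- Step D: reduce to subsets of size n
  have hred : ∑ t : Finset (Fin N), (μ {ω | S ω = t}).toReal • f t
      = (N.choose n : ℝ)⁻¹ * ∑ t ∈ powersetCard n (univ : Finset (Fin N)), f t := by
    rw [← Finset.sum_filter_add_sum_filter_not (univ : Finset (Finset (Fin N)))
      (fun t => t.card = n)]
    have hz : ∑ t ∈ (univ : Finset (Finset (Fin N))).filter (fun t => ¬ t.card = n),
        (μ {ω | S ω = t}).toReal • f t = 0 :=
      Finset.sum_eq_zero fun t ht => by
        rw [hzero t (Finset.mem_filter.1 ht).2]; simp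
    rw [hz, add_zero, hfilter_eq, Finset.mul_sum]
    refine Finset.sum_congr rfl fun t ht => ?_
    rw [hSunif t (mem_powersetCard.1 ht).2, smul_eq_mul, ENNReal.toReal_inv]
    norm_num
  -- Step E: combinatorics
  set G : ℝ := ∑ i, ∑ j, (x i - x j) ^ 2 with hG
  have hsum : ∑ t ∈ powersetCard n (univ : Finset (Fin N)), f t
      = ((N - 2).choose (n - 2) : ℝ) * G / (2 * n) / ((n : ℝ) - 1) := by
    have hcong : ∀ t ∈ powersetCard n (univ : Finset (Fin N)),
        f t = (∑ i ∈ t, ∑ j ∈ t, (x i - x j) ^ 2) / (2 * n) / ((n : ℝ) - 1) := by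
      intro t ht
      simp only [hf]
      rw [srswor_var_pairs x t (mem_powersetCard.1 ht).2 hn0]
    rw [Finset.sum_congr rfl hcong, ← Finset.sum_div, ← Finset.sum_div,
      srswor_sum_pairs_swap hn x]
  have hpop : ∑ j, (x j - (∑ i, x i) / (N : ℝ)) ^ 2 = G / (2 * N) :=
    srswor_var_pairs x univ (by rw [card_univ, Fintype.card_fin]) hN0
  have hid : (N : ℝ) * ((N : ℝ) - 1) * ((N - 2).choose (n - 2) : ℝ)
      = (N.choose n : ℝ) * ((n : ℝ) * ((n : ℝ) - 1)) := by
    have h := congrArg (Nat.cast : ℕ → ℝ) (srswor_choose_id hN hn)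
    rw [Nat.cast_mul, Nat.cast_mul, Nat.cast_mul, Nat.cast_mul,
      Nat.cast_sub (by omega : 1 ≤ N), Nat.cast_sub (by omega : 1 ≤ n), Nat.cast_one] at h
    exact h
  show ∫ ω, f (S ω) ∂μ = _
  rw [hint, hred, hsum, hpop]
  field_simp
  linear_combination G * hid
end

section
/- Let ξ_1,…,ξ_M be square-integrable real random variables with means t_h = E[ξ_h] and variances v_h = Var(ξ_h) that are pairwise uncorrelated (Cov(ξ_h, ξ_{h'}) = 0 for h ≠ h'), and let s be uniformly distributed over the m-element subsets of {1,…,M} (2 ≤ m ≤ M, M ≥ 2), independent of (ξ_1,…,ξ_M). Then the expected sample variance over the sampled indices is E[ (1/(m−1)) ∑_{h∈s} (ξ_h − ξ̄_s)² ] = (1/(M−1)) ∑_{h=1}^M (t_h − t̄)² + (1/M) ∑_{h=1}^M v_h, where ξ̄_s = (1/m) ∑_{h∈s} ξ_h and t̄ = (1/M) ∑_{h=1}^M t_h. -/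
open MeasureTheory ProbabilityTheory Finset
open scoped ENNReal

/-- Finite sets carry the discrete (⊤) σ-algebra. -/
instance finsetMeasurableSpace (α : Type*) : MeasurableSpace (Finset α) := ⊤

/-- The covariance of two real random variables:
`Cov(X,Y) = E[(X − E X)(Y − E Y)]`. -/
noncomputable def cov {Ω : Type*} [MeasurableSpace Ω] (μ : Measure Ω)
    (X Y : Ω → ℝ) : ℝ :=
  ∫ ω, (X ω - ∫ ω', X ω' ∂μ) * (Y ω - ∫ ω', Y ω' ∂μ) ∂μ

section AuxLemmas

/-- Counting subsets of fixed size containing a fixed subset. -/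
lemma count_subsets {α : Type*} [DecidableEq α] (u s : Finset α) (n : ℕ)
    (hs : s ⊆ u) (hkn : s.card ≤ n) :
    ((u.powersetCard n).filter fun t => s ⊆ t).card
      = (u.card - s.card).choose (n - s.card) := by
  have key : ((u.powersetCard n).filter fun t => s ⊆ t).card
      = ((u \ s).powersetCard (n - s.card)).card := by
    apply Finset.card_bij' (fun t _ => t \ s) (fun r _ => r ∪ s)
    · intro t ht
      simp only [Finset.mem_filter, Finset.mem_powersetCard] at ht ⊢
      obtain ⟨⟨htu, htc⟩, hst⟩ := ht
      exact ⟨Finset.sdiff_subset_sdiff htu Finset.Subset.rfl,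
        by rw [Finset.card_sdiff_of_subset hst, htc]⟩
    · intro r hr
      simp only [Finset.mem_filter, Finset.mem_powersetCard] at hr ⊢
      obtain ⟨hru, hrc⟩ := hr
      have hdisj : Disjoint r s := Finset.disjoint_of_subset_left hru Finset.sdiff_disjoint
      refine ⟨⟨Finset.union_subset (hru.trans (Finset.sdiff_subset)) hs, ?_⟩,
        Finset.subset_union_right⟩
      rw [Finset.card_union_of_disjoint hdisj, hrc, Nat.sub_add_cancel hkn]
    · intro t ht
      simp only [Finset.mem_filter] at ht
      exact Finset.sdiff_union_of_subset ht.2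
    · intro r hr
      simp only [Finset.mem_powersetCard] at hr
      exact Finset.union_sdiff_cancel_right
        (Finset.disjoint_of_subset_left hr.1 Finset.sdiff_disjoint)
  rw [key, Finset.card_powersetCard, Finset.card_sdiff_of_subset hs]

/-- Swap a sum over sets and their members. -/
lemma swap_mem {α β : Type*} [DecidableEq α] [Fintype α] [AddCommMonoid β]
    (P : Finset (Finset α)) (F : Finset α → α → β) :
    ∑ t ∈ P, ∑ h ∈ t, F t h
      = ∑ h : α, ∑ t ∈ P.filter fun t => h ∈ t, F t h := by
  simp_rw [Finset.sum_filter]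
  rw [Finset.sum_comm]
  refine Finset.sum_congr rfl fun t _ => ?_
  rw [Finset.sum_ite_mem, Finset.univ_inter]

/-- Expansion of the sum of squared deviations. -/
lemma sv_expand {ι : Type*} (t : Finset ι) (x : ι → ℝ) (c : ℝ)
    (hc : (t.card : ℝ) = c) (hc0 : c ≠ 0) :
    ∑ h ∈ t, (x h - (∑ h' ∈ t, x h') / c) ^ 2
      = ∑ h ∈ t, x h ^ 2 - (∑ h ∈ t, x h) ^ 2 / c := by
  have h1 : ∀ h ∈ t, (x h - (∑ h' ∈ t, x h') / c) ^ 2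
      = x h ^ 2 - (2 * (∑ h' ∈ t, x h') / c) * x h + ((∑ h' ∈ t, x h') / c) ^ 2 := by
    intros; ring
  rw [Finset.sum_congr rfl h1, Finset.sum_add_distrib, Finset.sum_sub_distrib,
    ← Finset.mul_sum, Finset.sum_const, nsmul_eq_mul, hc]
  field_simp
  ring_nf

/-- Product of two L² functions is integrable. -/
lemma integrable_mul2 {Ω : Type*} [MeasurableSpace Ω] {μ : Measure Ω} {f g : Ω → ℝ}
    (hf : MemLp f 2 μ) (hg : MemLp g 2 μ) : Integrable (fun ω => f ω * g ω) μ := by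
  have h1 := (hf.add hg).integrable_sq
  have h2 := hf.integrable_sq
  have h3 := hg.integrable_sq
  have h := ((h1.sub h2).sub h3).const_mul (2⁻¹ : ℝ)
  refine h.congr (Filter.Eventually.of_forall fun ω => ?_)
  simp only [Pi.add_apply, Pi.sub_apply]
  ring

lemma integral_mul_eq_cov {Ω : Type*} [MeasurableSpace Ω] (μ : Measure Ω)
    [IsProbabilityMeasure μ] {f g : Ω → ℝ} (hf : MemLp f 2 μ) (hg : MemLp g 2 μ) :
    ∫ ω, f ω * g ω ∂μ = cov μ f g + (∫ ω, f ω ∂μ) * ∫ ω, g ω ∂μ := by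
  have hfg := integrable_mul2 hf hg
  have hfi := hf.integrable one_le_two
  have hgi := hg.integrable one_le_two
  set a := ∫ ω, f ω ∂μ with ha
  set b := ∫ ω, g ω ∂μ with hb
  have e1 : ∀ ω, (f ω - a) * (g ω - b)
      = (f ω * g ω - a * g ω - b * f ω) + a * b := fun ω => by ring
  have hcov : cov μ f g = ∫ ω, ((f ω * g ω - a * g ω - b * f ω) + a * b) ∂μ := by
    unfold cov
    exact integral_congr_ae (Filter.Eventually.of_forall e1)
  have i1 : Integrable (fun ω => f ω * g ω - a * g ω) μ := hfg.sub (hgi.const_mul a)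
  have i2 : Integrable (fun ω => f ω * g ω - a * g ω - b * f ω) μ := i1.sub (hfi.const_mul b)
  rw [hcov, integral_add i2 (integrable_const (a * b)),
    integral_sub i1 (hfi.const_mul b), integral_sub hfg (hgi.const_mul a),
    integral_const_mul, integral_const_mul, integral_const]
  simp only [measure_univ, probReal_univ, ENNReal.toReal_one, smul_eq_mul, one_mul, ← ha, ← hb]
  ring

end AuxLemmas

/-- The sample-variance summand as a function of the sampled set. -/
noncomputable def sampVar {Ω : Type*} {M : ℕ} (m : ℝ) (ξ : Fin M → Ω → ℝ)
    (t : Finset (Fin M)) (ω : Ω) : ℝ :=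
  (∑ h ∈ t, (ξ h ω - (∑ h' ∈ t, ξ h' ω) / m) ^ 2) / (m - 1)

/-- **Expected sample variance of pairwise uncorrelated noisy values over a uniformly
random subset.**
If `ξ₁,…,ξ_M` are square-integrable, pairwise uncorrelated random variables with means
`t_h` and variances `v_h`, and `S` is uniformly distributed over the `m`-element subsets
of `{1,…,M}` (with `2 ≤ m ≤ M`), independent of the `ξ`'s, then
`E[(1/(m−1)) ∑_{h∈S} (ξ_h − ξ̄_S)²] = (1/(M−1)) ∑_h (t_h − t̄)² + (1/M) ∑_h v_h`. -/
theorem expected_sample_variance_uncorrelated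
    {Ω : Type*} [MeasurableSpace Ω] (μ : Measure Ω) [IsProbabilityMeasure μ]
    (M m : ℕ) (hM : 2 ≤ M) (hm : 2 ≤ m) (hmM : m ≤ M)
    (ξ : Fin M → Ω → ℝ) (hξ : ∀ h, MemLp (ξ h) 2 μ)
    (huncorr : ∀ h h' : Fin M, h ≠ h' → cov μ (ξ h) (ξ h') = 0)
    (S : Ω → Finset (Fin M)) (hSmeas : Measurable S)
    (hS : ∀ t : Finset (Fin M), t.card = m →
      μ {ω | S ω = t} = (M.choose m : ℝ≥0∞)⁻¹)
    (hIndep : IndepFun S (fun ω h => ξ h ω) μ) :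
    ∫ ω, (∑ h ∈ S ω, (ξ h ω - (∑ h' ∈ S ω, ξ h' ω) / (m : ℝ)) ^ 2) / ((m : ℝ) - 1) ∂μ =
      (∑ h, ((∫ ω, ξ h ω ∂μ) - (∑ h', ∫ ω, ξ h' ω ∂μ) / (M : ℝ)) ^ 2) / ((M : ℝ) - 1) +
        (∑ h, variance (ξ h) μ) / (M : ℝ) := by
  classical
  obtain ⟨tm, htm⟩ : ∃ tm : Fin M → ℝ, ∀ h, ∫ ω, ξ h ω ∂μ = tm h := ⟨_, fun _ => rfl⟩
  obtain ⟨v, hvv⟩ : ∃ v : Fin M → ℝ, ∀ h, variance (ξ h) μ = v h := ⟨_, fun _ => rfl⟩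
  have hmR : (2:ℝ) ≤ (m:ℝ) := by exact_mod_cast hm
  have hMR : (2:ℝ) ≤ (M:ℝ) := by exact_mod_cast hM
  have hm0 : (m:ℝ) ≠ 0 := by linarith
  have hm1 : (m:ℝ) - 1 ≠ 0 := by linarith
  have hM0 : (M:ℝ) ≠ 0 := by linarith
  have hM1 : (M:ℝ) - 1 ≠ 0 := by linarith
  have hC0 : 0 < M.choose m := Nat.choose_pos hmM
  have hCR : ((M.choose m : ℕ) : ℝ) ≠ 0 := by exact_mod_cast hC0.ne'
  set P : Finset (Finset (Fin M)) := Finset.powersetCard m Finset.univ with hP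
  -- measurability of the events {S = t}
  have hA : ∀ t : Finset (Fin M), MeasurableSet {ω | S ω = t} := fun t =>
    hSmeas (by trivial : MeasurableSet ({t} : Set (Finset (Fin M))))
  -- events of wrong cardinality are null
  have hnull : ∀ t : Finset (Fin M), t.card ≠ m → μ {ω | S ω = t} = 0 := by
    intro t ht
    have hPA : μ (⋃ t' ∈ P, {ω | S ω = t'}) = 1 := by
      rw [measure_biUnion_finset]
      · rw [Finset.sum_congr rfl fun t' ht' => hS t' (Finset.mem_powersetCard_univ.mp ht'),
          Finset.sum_const, Finset.card_powersetCard, Finset.card_univ, Fintype.card_fin,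
          nsmul_eq_mul, ENNReal.mul_inv_cancel (by exact_mod_cast hC0.ne')
            (ENNReal.natCast_ne_top _)]
      · intro t1 _ t2 _ hne
        refine Set.disjoint_left.mpr fun ω h1 h2 => hne ?_
        simp only [Set.mem_setOf_eq] at h1 h2
        rw [← h1, h2]
      · exact fun t' _ => hA t'
    have hmeasU : MeasurableSet (⋃ t' ∈ P, {ω | S ω = t'}) :=
      P.measurableSet_biUnion fun t' _ => hA t'
    have hsub : {ω | S ω = t} ⊆ (⋃ t' ∈ P, {ω | S ω = t'})ᶜ := by
      intro ω hω
      simp only [Set.mem_compl_iff, Set.mem_iUnion, Set.mem_setOf_eq, not_exists]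
      intro t' ht' hst'
      have hteq : t = t' := by rw [← hω, hst']
      exact ht (hteq ▸ Finset.mem_powersetCard_univ.mp ht')
    refine le_antisymm ?_ zero_le
    calc μ {ω | S ω = t} ≤ μ (⋃ t' ∈ P, {ω | S ω = t'})ᶜ := measure_mono hsub
    _ = 1 - 1 := by rw [prob_compl_eq_one_sub hmeasU, hPA]
    _ = 0 := by simp
  -- L² facts
  have hsumL : ∀ t : Finset (Fin M), MemLp (fun ω => ∑ h ∈ t, ξ h ω) 2 μ := by
    intro t
    have h1 := memLp_finset_sum' (μ := μ) (p := 2) t (fun i (_ : i ∈ t) => hξ i)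
    have h2 : (fun ω => ∑ h ∈ t, ξ h ω) = (∑ h ∈ t, ξ h) := by
      funext ω; simp
    rwa [h2]
  have hdev : ∀ (t : Finset (Fin M)) (h : Fin M),
      MemLp (fun ω => ξ h ω - (∑ h' ∈ t, ξ h' ω) / (m : ℝ)) 2 μ := by
    intro t h
    have h1 := (hsumL t).const_mul ((m : ℝ)⁻¹)
    have h2 : (fun ω => ξ h ω - (∑ h' ∈ t, ξ h' ω) / (m : ℝ))
        = fun ω => ξ h ω - (m : ℝ)⁻¹ * ∑ h' ∈ t, ξ h' ω := by
      funext ω; rw [div_eq_inv_mul]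
    rw [h2]
    exact (hξ h).sub h1
  have hGint : ∀ t : Finset (Fin M), Integrable (sampVar (m : ℝ) ξ t) μ := by
    intro t
    unfold sampVar
    exact (integrable_finset_sum t fun h _ => (hdev t h).integrable_sq).div_const _
  -- second moments
  have hsq : ∀ h : Fin M, ∫ ω, ξ h ω ^ 2 ∂μ = v h + tm h ^ 2 := by
    intro h
    have h1 := variance_eq_sub (hξ h)
    simp only [Pi.pow_apply] at h1
    rw [htm, hvv] at h1
    linarith
  have hprod : ∀ h h' : Fin M,
      ∫ ω, ξ h ω * ξ h' ω ∂μ = tm h * tm h' + (if h = h' then v h else 0) := by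
    intro h h'
    by_cases hh : h = h'
    · subst hh
      simp only [if_pos rfl]
      have e : (fun ω => ξ h ω * ξ h ω) = fun ω => ξ h ω ^ 2 := by
        funext ω; ring
    /- goal: ∫ ξ h * ξ h = tm h * tm h + v h -/
      rw [e, hsq h]
      simp only [if_true]
      ring
    · rw [integral_mul_eq_cov μ (hξ h) (hξ h'), huncorr h h' hh, htm, htm]
      simp [hh]
  have hsecond : ∀ t : Finset (Fin M),
      ∫ ω, (∑ h ∈ t, ξ h ω) ^ 2 ∂μ = (∑ h ∈ t, tm h) ^ 2 + ∑ h ∈ t, v h := by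
    intro t
    have e : (fun ω => (∑ h ∈ t, ξ h ω) ^ 2)
        = fun ω => ∑ h ∈ t, ∑ h' ∈ t, ξ h ω * ξ h' ω := by
      funext ω; rw [sq, Finset.sum_mul_sum]
    rw [e, integral_finset_sum t
      (fun h _ => integrable_finset_sum t fun h' _ => integrable_mul2 (hξ h) (hξ h'))]
    have e2 : ∀ h ∈ t, ∫ ω, ∑ h' ∈ t, ξ h ω * ξ h' ω ∂μ
        = ∑ h' ∈ t, (tm h * tm h' + if h = h' then v h else 0) := by
      intro h _
      rw [integral_finset_sum t (fun h' _ => integrable_mul2 (hξ h) (hξ h'))]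
      exact Finset.sum_congr rfl fun h' _ => hprod h h'
    rw [Finset.sum_congr rfl e2,
      Finset.sum_congr rfl fun h (_ : h ∈ t) => Finset.sum_add_distrib,
      Finset.sum_add_distrib, ← Finset.sum_mul_sum, ← sq]
    congr 1
    refine Finset.sum_congr rfl fun h hh => ?_
    rw [Finset.sum_ite_eq t h fun _ => v h, if_pos hh]
  -- value of the integral of sampVar on a set of cardinality m
  have hGval : ∀ t : Finset (Fin M), t.card = m →
      ∫ ω, sampVar (m : ℝ) ξ t ω ∂μ
        = ((∑ h ∈ t, (v h + tm h ^ 2))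
            - ((∑ h ∈ t, tm h) ^ 2 + ∑ h ∈ t, v h) / (m : ℝ)) / ((m : ℝ) - 1) := by
    intro t ht
    have hpt : (fun ω => sampVar (m : ℝ) ξ t ω)
        = fun ω => (∑ h ∈ t, ξ h ω ^ 2 - (∑ h ∈ t, ξ h ω) ^ 2 / (m : ℝ)) / ((m : ℝ) - 1) := by
      funext ω
      unfold sampVar
      rw [sv_expand t (fun h => ξ h ω) (m : ℝ) (by rw [ht]) hm0]
    rw [hpt, integral_div,
      integral_sub (integrable_finset_sum t fun h _ => (hξ h).integrable_sq)
        ((hsumL t).integrable_sq.div_const _),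
      integral_div, integral_finset_sum t (fun h _ => (hξ h).integrable_sq),
      Finset.sum_congr rfl fun h (_ : h ∈ t) => hsq h, hsecond t]
  -- measurability of the sample variance as a function of the values
  have hψ : ∀ t : Finset (Fin M), Measurable (fun x : Fin M → ℝ =>
      (∑ h ∈ t, (x h - (∑ h' ∈ t, x h') / (m : ℝ)) ^ 2) / ((m : ℝ) - 1)) := by
    intro t
    have hs : Measurable (fun x : Fin M → ℝ => ∑ h' ∈ t, x h') :=
      Finset.measurable_sum t fun h' _ => measurable_pi_apply h'
    exact (Finset.measurable_sum t fun h _ =>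
      ((measurable_pi_apply h).sub (hs.div_const _)).pow_const 2).div_const _
  have hkey : ∀ t : Finset (Fin M),
      ∫ ω, (if S ω = t then (1:ℝ) else 0) * sampVar (m : ℝ) ξ t ω ∂μ
        = (μ {ω | S ω = t}).toReal * ∫ ω, sampVar (m : ℝ) ξ t ω ∂μ := by
    intro t
    have hind : IndepFun (fun ω => if S ω = t then (1:ℝ) else 0) (sampVar (m : ℝ) ξ t) μ := by
      have h := hIndep.comp (φ := fun s : Finset (Fin M) => if s = t then (1:ℝ) else 0)
        (ψ := fun x : Fin M → ℝ =>
          (∑ h ∈ t, (x h - (∑ h' ∈ t, x h') / (m : ℝ)) ^ 2) / ((m : ℝ) - 1))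
        measurable_from_top (hψ t)
      exact h
    have he : (fun ω => if S ω = t then (1:ℝ) else 0)
        = Set.indicator {ω | S ω = t} (fun _ => (1:ℝ)) := by
      funext ω
      simp [Set.indicator_apply, Set.mem_setOf_eq]
    have hIint : Integrable (fun ω => if S ω = t then (1:ℝ) else 0) μ := by
      rw [he]; exact (integrable_const (1:ℝ)).indicator (hA t)
    have hmul := hind.integral_fun_mul_eq_mul_integral hIint.aestronglyMeasurable (hGint t).aestronglyMeasurable
    have hIval : ∫ ω, (if S ω = t then (1:ℝ) else 0) ∂μ = (μ {ω | S ω = t}).toReal := by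
      rw [he, integral_indicator_const (1:ℝ) (hA t)]
      simp [measureReal_def]
    calc ∫ ω, (if S ω = t then (1:ℝ) else 0) * sampVar (m : ℝ) ξ t ω ∂μ
        = (∫ ω, (if S ω = t then (1:ℝ) else 0) ∂μ) * ∫ ω, sampVar (m : ℝ) ξ t ω ∂μ := hmul
      _ = _ := by rw [hIval]
  have hdecomp : ∫ ω, (∑ h ∈ S ω, (ξ h ω - (∑ h' ∈ S ω, ξ h' ω) / (m : ℝ)) ^ 2) / ((m : ℝ) - 1) ∂μ
      = ∑ t : Finset (Fin M), (μ {ω | S ω = t}).toReal * ∫ ω, sampVar (m : ℝ) ξ t ω ∂μ := by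
    have e : (fun ω => (∑ h ∈ S ω, (ξ h ω - (∑ h' ∈ S ω, ξ h' ω) / (m : ℝ)) ^ 2) / ((m : ℝ) - 1))
        = fun ω => ∑ t : Finset (Fin M), (if S ω = t then (1:ℝ) else 0) * sampVar (m : ℝ) ξ t ω := by
      funext ω
      have h1 : (∑ h ∈ S ω, (ξ h ω - (∑ h' ∈ S ω, ξ h' ω) / (m : ℝ)) ^ 2) / ((m : ℝ) - 1)
          = sampVar (m : ℝ) ξ (S ω) ω := rfl
      rw [h1]
      symm
      simp only [ite_mul, one_mul, zero_mul]
      simpa using Finset.sum_ite_eq Finset.univ (S ω) (fun t => sampVar (m : ℝ) ξ t ω)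
    have hint : ∀ t ∈ (Finset.univ : Finset (Finset (Fin M))),
        Integrable (fun ω => (if S ω = t then (1:ℝ) else 0) * sampVar (m : ℝ) ξ t ω) μ :=
      fun t _ => (hGint t).bdd_mul
        ((measurable_from_top (f := fun s : Finset (Fin M) => if s = t then (1:ℝ) else 0)).comp
          hSmeas).aestronglyMeasurable
        (Filter.Eventually.of_forall (fun ω => by by_cases hc : S ω = t <;> simp [hc]) :
          ∀ᵐ ω ∂μ, ‖(if S ω = t then (1:ℝ) else 0)‖ ≤ 1)
    rw [e, integral_finset_sum Finset.univ hint]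
    exact Finset.sum_congr rfl fun t _ => hkey t
  have hrestrict : ∑ t : Finset (Fin M), (μ {ω | S ω = t}).toReal * ∫ ω, sampVar (m : ℝ) ξ t ω ∂μ
      = ∑ t ∈ P, ((M.choose m : ℝ))⁻¹ * ∫ ω, sampVar (m : ℝ) ξ t ω ∂μ := by
    rw [← Finset.sum_subset (Finset.subset_univ P) ?_]
    · refine Finset.sum_congr rfl fun t ht => ?_
      rw [hS t (Finset.mem_powersetCard_univ.mp ht), ENNReal.toReal_inv]
      simp
    · intro t _ htP
      rw [hnull t fun hc => htP (Finset.mem_powersetCard_univ.mpr hc)]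
      simp
  have hGrw : ∑ t ∈ P, ((M.choose m : ℝ))⁻¹ * ∫ ω, sampVar (m : ℝ) ξ t ω ∂μ
      = ∑ t ∈ P, ((M.choose m : ℝ))⁻¹ *
        (((∑ h ∈ t, (v h + tm h ^ 2)) - ((∑ h ∈ t, tm h) ^ 2 + ∑ h ∈ t, v h) / (m : ℝ))
          / ((m : ℝ) - 1)) :=
    Finset.sum_congr rfl fun t ht => by rw [hGval t (Finset.mem_powersetCard_univ.mp ht)]
  -- counting lemmas
  have hcard1 : ∀ h : Fin M, (P.filter fun t => h ∈ t).card = (M-1).choose (m-1) := by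
    intro h
    have e : (P.filter fun t => h ∈ t) = P.filter fun t => ({h} : Finset (Fin M)) ⊆ t :=
      Finset.filter_congr fun t _ => by simp
    rw [e, hP, count_subsets Finset.univ {h} m (Finset.subset_univ _) (by simp; omega)]
    simp
  have hcard2 : ∀ h h' : Fin M, h ≠ h' →
      (P.filter fun t => h ∈ t ∧ h' ∈ t).card = (M-2).choose (m-2) := by
    intro h h' hne
    have e : (P.filter fun t => h ∈ t ∧ h' ∈ t)
        = P.filter fun t => ({h, h'} : Finset (Fin M)) ⊆ t :=
      Finset.filter_congr fun t _ => by simp [Finset.insert_subset_iff]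
    have hcc : ({h, h'} : Finset (Fin M)).card = 2 := by
      rw [Finset.card_insert_of_notMem (by simpa using hne), Finset.card_singleton]
    rw [e, hP, count_subsets Finset.univ {h, h'} m (Finset.subset_univ _) (by rw [hcc]; exact hm),
      hcc]
    simp
  have hcnt1 : ∀ a : Fin M → ℝ,
      ∑ t ∈ P, ∑ h ∈ t, a h = ((M-1).choose (m-1) : ℝ) * ∑ h, a h := by
    intro a
    rw [swap_mem]
    rw [Finset.sum_congr rfl fun h (_ : h ∈ Finset.univ) => by
      rw [Finset.sum_const, hcard1 h, nsmul_eq_mul]]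
    rw [← Finset.mul_sum]
  have hcnt2 : ∀ b : Fin M → ℝ, ∑ t ∈ P, (∑ h ∈ t, b h) ^ 2
      = ((M-2).choose (m-2) : ℝ) * (∑ h, b h) ^ 2
        + (((M-1).choose (m-1) : ℝ) - ((M-2).choose (m-2) : ℝ)) * ∑ h, b h ^ 2 := by
    intro b
    have e : ∀ t ∈ P, (∑ h ∈ t, b h) ^ 2 = ∑ h ∈ t, ∑ h' ∈ t, b h * b h' := fun t _ => by
      rw [sq, Finset.sum_mul_sum]
    rw [Finset.sum_congr rfl e, swap_mem]
    have e2 : ∀ h : Fin M, ∑ t ∈ P.filter (fun t => h ∈ t), ∑ h' ∈ t, b h * b h'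
        = ∑ h' : Fin M,
          ((((P.filter fun t => h ∈ t).filter fun t => h' ∈ t).card : ℝ)) * (b h * b h') := by
      intro h
      rw [swap_mem]
      exact Finset.sum_congr rfl fun h' _ => by rw [Finset.sum_const, nsmul_eq_mul]
    rw [Finset.sum_congr rfl fun h (_ : h ∈ Finset.univ) => e2 h]
    have e3 : ∀ h h' : Fin M,
        ((((P.filter fun t => h ∈ t).filter fun t => h' ∈ t).card : ℝ)) * (b h * b h')
          = ((M-2).choose (m-2) : ℝ) * (b h * b h')
            + (if h = h'
                then (((M-1).choose (m-1) : ℝ) - ((M-2).choose (m-2) : ℝ)) * b h ^ 2 else 0) := by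
      intro h h'
      rw [Finset.filter_filter]
      by_cases hh : h = h'
      · subst hh
        simp only [and_self, if_true]
        rw [hcard1 h]
        ring
      · rw [hcard2 h h' hh, if_neg hh, add_zero]
    rw [Finset.sum_congr rfl fun h (_ : h ∈ Finset.univ) =>
      Finset.sum_congr rfl fun h' (_ : h' ∈ Finset.univ) => e3 h h']
    rw [Finset.sum_congr rfl fun h (_ : h ∈ Finset.univ) => Finset.sum_add_distrib,
      Finset.sum_add_distrib]
    congr 1
    · simp_rw [← Finset.mul_sum]
      congr 1
      rw [← Finset.sum_mul, ← sq]
    · rw [Finset.sum_congr rfl fun h (_ : h ∈ Finset.univ) => Finset.sum_ite_eq Finset.univ h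
        fun _ => (((M-1).choose (m-1) : ℝ) - ((M-2).choose (m-2) : ℝ)) * b h ^ 2]
      simp only [Finset.mem_univ, if_true]
      rw [← Finset.mul_sum]
  -- put everything together
  simp only [htm, hvv]
  rw [hdecomp, hrestrict, hGrw]
  have hlin : ∀ t ∈ P, ((M.choose m : ℝ))⁻¹ *
      (((∑ h ∈ t, (v h + tm h ^ 2)) - ((∑ h ∈ t, tm h) ^ 2 + ∑ h ∈ t, v h) / (m : ℝ))
        / ((m : ℝ) - 1))
      = (∑ h ∈ t, (v h + tm h ^ 2)) * (((M.choose m : ℝ))⁻¹ / ((m : ℝ) - 1))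
        - (∑ h ∈ t, tm h) ^ 2 * (((M.choose m : ℝ))⁻¹ / (((m : ℝ) - 1) * (m : ℝ)))
        - (∑ h ∈ t, v h) * (((M.choose m : ℝ))⁻¹ / (((m : ℝ) - 1) * (m : ℝ))) := by
    intro t _
    field_simp
    ring
  rw [Finset.sum_congr rfl hlin, Finset.sum_sub_distrib, Finset.sum_sub_distrib,
    ← Finset.sum_mul, ← Finset.sum_mul, ← Finset.sum_mul,
    hcnt1 (fun h => v h + tm h ^ 2), hcnt2 tm, hcnt1 v, Finset.sum_add_distrib,
    sv_expand Finset.univ tm (M : ℝ) (by simp) hM0]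
  -- numeric relations between binomial coefficients
  have r1 : ((M-1).choose (m-1) : ℝ) * (M : ℝ) = ((M.choose m : ℕ) : ℝ) * (m : ℝ) := by
    have h := Nat.add_one_mul_choose_eq (M-1) (m-1)
    have hM' : M - 1 + 1 = M := Nat.succ_pred_eq_of_pos (show 0 < M by omega)
    have hm' : m - 1 + 1 = m := Nat.succ_pred_eq_of_pos (show 0 < m by omega)
    rw [hM', hm'] at h
    have h2 : ((M * (M-1).choose (m-1) : ℕ) : ℝ) = ((M.choose m * m : ℕ) : ℝ) := by
      exact_mod_cast congrArg (fun n : ℕ => (n : ℝ)) h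
    push_cast at h2
    linarith
  have r2 : ((M-2).choose (m-2) : ℝ) * ((M : ℝ) - 1)
      = ((M-1).choose (m-1) : ℝ) * ((m : ℝ) - 1) := by
    have h := Nat.add_one_mul_choose_eq (M-2) (m-2)
    have hM' : M - 2 + 1 = M - 1 := by omega
    have hm' : m - 2 + 1 = m - 1 := by omega
    rw [hM', hm'] at h
    have h2 : (((M-1) * (M-2).choose (m-2) : ℕ) : ℝ) = (((M-1).choose (m-1) * (m-1) : ℕ) : ℝ) := by
      exact_mod_cast congrArg (fun n : ℕ => (n : ℝ)) h
    push_cast [Nat.cast_sub (show 1 ≤ M by omega), Nat.cast_sub (show 1 ≤ m by omega)] at h2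
    linarith
  have hc1 : ((M-1).choose (m-1) : ℝ) = ((M.choose m : ℕ) : ℝ) * (m : ℝ) / (M : ℝ) :=
    (eq_div_iff hM0).mpr r1
  have hc2 : ((M-2).choose (m-2) : ℝ)
      = ((M.choose m : ℕ) : ℝ) * (m : ℝ) * ((m : ℝ) - 1) / ((M : ℝ) * ((M : ℝ) - 1)) := by
    rw [eq_div_iff (mul_ne_zero hM0 hM1)]
    linear_combination ((m : ℝ) - 1) * r1 + (M : ℝ) * r2
  rw [hc1, hc2]
  field_simp
  ring
end

section
/- Let x_1,…,x_N be real values on a population of N ≥ 2 units, let s₁ be uniformly distributed over the n-element subsets of {1,…,N} with 2 ≤ n ≤ N, and let T₁, T₂ be square-integrable real random variables with E[T₁ | s₁] = ∑_{j∈s₁} x_j and E[T₂ | s₁] = ∑_{j∈s₁} x_j². Then the plug-in variance estimator Ŝ² = (1/(n−1)) (T₂ − T₁²/n) satisfies E[Ŝ²] = S²_x − (1/(n(n−1))) E[Var(T₁ | s₁)]. -/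
open MeasureTheory ProbabilityTheory Finset
open scoped ENNReal

/-- The conditional variance of `X` given the sub-σ-algebra `m`. -/
noncomputable def condVarFn {Ω : Type*} {m0 : MeasurableSpace Ω} (m : MeasurableSpace Ω)
    (μ : @MeasureTheory.Measure Ω m0) (X : Ω → ℝ) : Ω → ℝ :=
  μ[fun ω => (X ω - (μ[X|m]) ω) ^ 2 | m]

lemma card_filter_subset_powersetCard {α : Type*} [DecidableEq α] (s u : Finset α) (k : ℕ)
    (hus : u ⊆ s) (huk : u.card ≤ k) :
    ((Finset.powersetCard k s).filter (fun t => u ⊆ t)).card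
      = (s.card - u.card).choose (k - u.card) := by
  rw [← Finset.card_sdiff_of_subset hus, ← Finset.card_powersetCard]
  refine Finset.card_bij' (fun t _ => t \ u) (fun v _ => v ∪ u) ?_ ?_ ?_ ?_
  · intro t ht
    rw [Finset.mem_filter, Finset.mem_powersetCard] at ht
    rw [Finset.mem_powersetCard]
    exact ⟨Finset.sdiff_subset_sdiff ht.1.1 le_rfl, by rw [Finset.card_sdiff_of_subset ht.2, ht.1.2]⟩
  · intro v hv
    rw [Finset.mem_powersetCard] at hv
    have hdisj : Disjoint v u := Finset.disjoint_of_subset_left hv.1 Finset.sdiff_disjoint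
    rw [Finset.mem_filter, Finset.mem_powersetCard]
    refine ⟨⟨Finset.union_subset (hv.1.trans (Finset.sdiff_subset)) hus, ?_⟩,
      Finset.subset_union_right⟩
    rw [Finset.card_union_of_disjoint hdisj, hv.2, Nat.sub_add_cancel huk]
  · intro t ht
    rw [Finset.mem_filter] at ht
    exact Finset.sdiff_union_of_subset ht.2
  · intro v hv
    rw [Finset.mem_powersetCard] at hv
    have hdisj : Disjoint v u := Finset.disjoint_of_subset_left hv.1 Finset.sdiff_disjoint
    show (v ∪ u) \ u = v
    rw [Finset.union_sdiff_right, Finset.sdiff_eq_self_iff_disjoint.mpr hdisj]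

lemma sum_powersetCard_sum {α : Type*} [DecidableEq α] [Fintype α] (k : ℕ) (hk : 1 ≤ k)
    (f : α → ℝ) :
    ∑ t ∈ Finset.powersetCard k (univ : Finset α), ∑ j ∈ t, f j
      = ((Fintype.card α - 1).choose (k - 1) : ℝ) * ∑ j, f j := by
  have h1 : ∀ t ∈ Finset.powersetCard k (univ : Finset α),
      ∑ j ∈ t, f j = ∑ j, if j ∈ t then f j else 0 := by
    intro t _
    rw [Finset.sum_ite_mem, Finset.univ_inter]
  rw [Finset.sum_congr rfl h1, Finset.sum_comm]
  have h2 : ∀ j : α, ∑ t ∈ Finset.powersetCard k (univ : Finset α), (if j ∈ t then f j else 0)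
      = ((Fintype.card α - 1).choose (k - 1) : ℝ) * f j := by
    intro j
    rw [← Finset.sum_filter, Finset.sum_const, nsmul_eq_mul]
    congr 1
    have : ∀ t : Finset α, (j ∈ t) = (({j} : Finset α) ⊆ t) := by
      intro t; simp [Finset.singleton_subset_iff]
    simp_rw [this]
    rw [card_filter_subset_powersetCard _ _ _ (Finset.subset_univ _) (by simpa using hk)]
    simp [Finset.card_univ]
  rw [Finset.sum_congr rfl fun j _ => h2 j, ← Finset.mul_sum]

lemma sum_powersetCard_sq {α : Type*} [DecidableEq α] [Fintype α] (k : ℕ) (hk : 2 ≤ k)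
    (x : α → ℝ) :
    ∑ t ∈ Finset.powersetCard k (univ : Finset α), (∑ j ∈ t, x j) ^ 2
      = ((Fintype.card α - 1).choose (k - 1) : ℝ) * ∑ j, x j ^ 2
        + ((Fintype.card α - 2).choose (k - 2) : ℝ) * ∑ i, ∑ j ∈ univ.erase i, x i * x j := by
  have hIJ : ∀ (i j : α) (t : Finset α), (({i, j} : Finset α) ⊆ t) ↔ (i ∈ t ∧ j ∈ t) := by
    intro i j t; simp [Finset.insert_subset_iff]
  have hexp : ∀ t : Finset α, (∑ j ∈ t, x j) ^ 2
      = (∑ j ∈ t, x j ^ 2) + ∑ i ∈ t, ∑ j ∈ t.erase i, x i * x j := by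
    intro t
    rw [sq, Finset.sum_mul_sum, ← Finset.sum_add_distrib]
    refine Finset.sum_congr rfl fun i hi => ?_
    rw [← Finset.add_sum_erase _ _ hi, ← sq]
  have hkey : ∀ t ∈ Finset.powersetCard k (univ : Finset α),
      ∑ i ∈ t, ∑ j ∈ t.erase i, x i * x j
      = ∑ i, ∑ j ∈ univ.erase i, if ({i, j} : Finset α) ⊆ t then x i * x j else 0 := by
    intro t _
    rw [eq_comm]
    calc ∑ i, ∑ j ∈ univ.erase i, (if ({i, j} : Finset α) ⊆ t then x i * x j else 0)
        = ∑ i, (if i ∈ t then ∑ j ∈ univ.erase i, (if j ∈ t then x i * x j else 0) else 0) := by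
          refine Finset.sum_congr rfl fun i _ => ?_
          by_cases hi : i ∈ t
          · rw [if_pos hi]
            refine Finset.sum_congr rfl fun j _ => ?_
            simp [hIJ, hi]
          · rw [if_neg hi]
            refine Finset.sum_eq_zero fun j _ => ?_
            simp [hIJ, hi]
      _ = ∑ i ∈ t, ∑ j ∈ univ.erase i, (if j ∈ t then x i * x j else 0) := by
          rw [← Finset.sum_filter]
          congr 1
          ext i; simp
      _ = ∑ i ∈ t, ∑ j ∈ t.erase i, x i * x j := by
          refine Finset.sum_congr rfl fun i hi => ?_
          rw [← Finset.sum_filter]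
          congr 1
          ext j
          simp only [Finset.mem_filter, Finset.mem_erase, Finset.mem_univ, true_and]
          tauto
  calc ∑ t ∈ Finset.powersetCard k (univ : Finset α), (∑ j ∈ t, x j) ^ 2
      = (∑ t ∈ Finset.powersetCard k (univ : Finset α), ∑ j ∈ t, x j ^ 2)
        + ∑ t ∈ Finset.powersetCard k (univ : Finset α),
            ∑ i, ∑ j ∈ univ.erase i, if ({i, j} : Finset α) ⊆ t then x i * x j else 0 := by
        rw [← Finset.sum_add_distrib]
        refine Finset.sum_congr rfl fun t ht => ?_
        rw [hexp t, hkey t ht]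
    _ = _ := by
        congr 1
        · exact sum_powersetCard_sum k (le_trans one_le_two hk) (fun j => x j ^ 2)
        · rw [Finset.sum_comm, Finset.mul_sum]
          refine Finset.sum_congr rfl fun i _ => ?_
          rw [Finset.sum_comm, Finset.mul_sum]
          refine Finset.sum_congr rfl fun j hj => ?_
          rw [← Finset.sum_filter, Finset.sum_const, nsmul_eq_mul]
          congr 1
          have hij : i ≠ j := (Finset.mem_erase.mp hj).1.symm
          rw [card_filter_subset_powersetCard _ _ _ (Finset.subset_univ _)
            (by rw [Finset.card_pair hij]; exact hk)]
          rw [Finset.card_pair hij]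
          simp [Finset.card_univ]

set_option maxHeartbeats 1000000 in
/-- **Bias of the plug-in variance estimator.**
Let `S` be a SRSWOR of size `n` (`2 ≤ n ≤ N`) from a population of `N ≥ 2` units and
let `T₁, T₂` be square-integrable with `E[T₁ | S] = ∑_{j∈S} x_j` and
`E[T₂ | S] = ∑_{j∈S} x_j²`.  Then `Ŝ² = (1/(n−1)) (T₂ − T₁²/n)` satisfies
`E[Ŝ²] = S²_x − (1/(n(n−1))) E[Var(T₁ | S)]`. -/
theorem plug_in_variance_estimator_expectation
    {Ω : Type*} [MeasurableSpace Ω] (μ : Measure Ω) [IsProbabilityMeasure μ]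
    (N n : ℕ) (hN : 2 ≤ N) (hn : 2 ≤ n) (hnN : n ≤ N)
    (x : Fin N → ℝ)
    (S : Ω → Finset (Fin N)) (hSmeas : Measurable S)
    (hS : ∀ t : Finset (Fin N), t.card = n →
      μ {ω | S ω = t} = (N.choose n : ℝ≥0∞)⁻¹)
    (T₁ T₂ : Ω → ℝ) (hT₁ : MemLp T₁ 2 μ) (hT₂ : MemLp T₂ 2 μ)
    (hT₁unb : μ[T₁ | MeasurableSpace.comap S ⊤] =ᵐ[μ] fun ω => ∑ j ∈ S ω, x j)
    (hT₂unb : μ[T₂ | MeasurableSpace.comap S ⊤] =ᵐ[μ] fun ω => ∑ j ∈ S ω, x j ^ 2) :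
    ∫ ω, (T₂ ω - T₁ ω ^ 2 / (n : ℝ)) / ((n : ℝ) - 1) ∂μ =
      (∑ j, (x j - (∑ i, x i) / (N : ℝ)) ^ 2) / ((N : ℝ) - 1) -
        (1 / ((n : ℝ) * ((n : ℝ) - 1))) *
          ∫ ω, condVarFn (MeasurableSpace.comap S ⊤) μ T₁ ω ∂μ := by
  classical
  have hm : MeasurableSpace.comap S ⊤ ≤ (inferInstance : MeasurableSpace Ω) :=
    hSmeas.comap_le
  set P := Finset.powersetCard n (univ : Finset (Fin N)) with hP_def
  have hPcard : P.card = N.choose n := by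
    rw [hP_def, Finset.card_powersetCard, Finset.card_univ, Fintype.card_fin]
  have hCpos : 0 < N.choose n := Nat.choose_pos hnN
  have hCne : (N.choose n : ℝ≥0∞) ≠ 0 := by exact_mod_cast hCpos.ne'
  have hmeasu : ∀ u : Finset (Fin N), MeasurableSet {ω | S ω = u} := fun u =>
    hSmeas (MeasurableSpace.measurableSet_top (s := {u}))
  -- events off the card-n sets are null
  have hzero : ∀ t : Finset (Fin N), t.card ≠ n → μ {ω | S ω = t} = 0 := by
    intro t ht
    have htP : t ∉ P := fun h => ht (Finset.mem_powersetCard.mp h).2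
    have hdisj : (↑(insert t P) : Set (Finset (Fin N))).PairwiseDisjoint
        (fun u => {ω | S ω = u}) := by
      intro a _ b _ hab
      simp only [Function.onFun, Set.disjoint_left, Set.mem_setOf_eq]
      intro ω ha hb
      exact hab (ha ▸ hb ▸ rfl)
    have hsum := measure_biUnion_finset (μ := μ) hdisj (fun u _ => hmeasu u)
    have hle : μ (⋃ u ∈ (insert t P : Finset (Finset (Fin N))), {ω | S ω = u}) ≤ 1 := by
      rw [← measure_univ (μ := μ)]
      exact measure_mono (Set.subset_univ _)
    rw [hsum, Finset.sum_insert htP] at hle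
    have hPsum : ∑ u ∈ P, μ {ω | S ω = u} = 1 := by
      rw [Finset.sum_congr rfl fun u hu => hS u (Finset.mem_powersetCard.mp hu).2,
        Finset.sum_const, hPcard, nsmul_eq_mul,
        ENNReal.mul_inv_cancel hCne (ENNReal.natCast_ne_top _)]
    rw [hPsum] at hle
    have h01 : μ {ω | S ω = t} + 1 ≤ 0 + 1 := by simpa using hle
    have := (ENNReal.add_le_add_iff_right ENNReal.one_ne_top).mp h01
    exact le_antisymm this zero_le
  -- integral of a function of S
  have intS : ∀ g : Finset (Fin N) → ℝ,
      ∫ ω, g (S ω) ∂μ = (∑ t ∈ P, g t) / (N.choose n : ℝ) := by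
    intro g
    have hgS : ∀ ω, g (S ω)
        = ∑ t : Finset (Fin N), Set.indicator {ω' | S ω' = t} (fun _ => g t) ω := by
      intro ω
      rw [Finset.sum_eq_single (S ω)]
      · rw [Set.indicator_of_mem]
        exact rfl
      · intro b _ hb
        apply Set.indicator_of_notMem
        simp only [Set.mem_setOf_eq]
        exact fun h => hb h.symm
      · intro h; exact absurd (Finset.mem_univ _) h
    calc ∫ ω, g (S ω) ∂μ
        = ∫ ω, ∑ t : Finset (Fin N), Set.indicator {ω' | S ω' = t} (fun _ => g t) ω ∂μ :=
          integral_congr_ae (Filter.Eventually.of_forall hgS)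
      _ = ∑ t : Finset (Fin N), ∫ ω, Set.indicator {ω' | S ω' = t} (fun _ => g t) ω ∂μ :=
          integral_finset_sum _ (fun t _ => (integrable_const (g t)).indicator (hmeasu t))
      _ = ∑ t : Finset (Fin N), (μ {ω | S ω = t}).toReal * g t := by
          refine Finset.sum_congr rfl fun t _ => ?_
          rw [integral_indicator_const _ (hmeasu t), smul_eq_mul]
          rfl
      _ = ∑ t ∈ P, (μ {ω | S ω = t}).toReal * g t := by
          refine (Finset.sum_subset (Finset.subset_univ P) ?_).symm
          intro t _ htP
          have hcard : t.card ≠ n := fun h =>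
            htP (Finset.mem_powersetCard.mpr ⟨Finset.subset_univ t, h⟩)
          rw [hzero t hcard]
          simp
      _ = ∑ t ∈ P, g t / (N.choose n : ℝ) := by
          refine Finset.sum_congr rfl fun t ht => ?_
          rw [hS t (Finset.mem_powersetCard.mp ht).2, ENNReal.toReal_inv,
            ENNReal.toReal_natCast, inv_mul_eq_div]
      _ = (∑ t ∈ P, g t) / (N.choose n : ℝ) := by rw [Finset.sum_div]
  -- integrability facts
  have hint₁ : Integrable T₁ μ := hT₁.integrable one_le_two
  have hint₂ : Integrable T₂ μ := hT₂.integrable one_le_two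
  have hT₁sq : Integrable (fun ω => T₁ ω ^ 2) μ := hT₁.integrable_sq
  obtain ⟨c₀, hc₀⟩ : ∃ c₀ : ℝ, ∀ t : Finset (Fin N), ‖∑ j ∈ t, x j‖ ≤ c₀ :=
    Finite.exists_le _
  have hYbd : ∀ᵐ ω ∂μ, ‖(μ[T₁|MeasurableSpace.comap S ⊤]) ω‖ ≤ c₀ := by
    filter_upwards [hT₁unb] with ω h
    rw [h]
    exact hc₀ _
  have hYmeas0 : AEStronglyMeasurable (μ[T₁|MeasurableSpace.comap S ⊤]) μ :=
    (stronglyMeasurable_condExp.mono hm).aestronglyMeasurable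
  have hYT : Integrable (fun ω => (μ[T₁|MeasurableSpace.comap S ⊤]) ω * T₁ ω) μ := hint₁.bdd_mul hYmeas0 hYbd
  have hYY : Integrable (fun ω => (μ[T₁|MeasurableSpace.comap S ⊤]) ω * (μ[T₁|MeasurableSpace.comap S ⊤]) ω) μ :=
    integrable_condExp.bdd_mul hYmeas0 hYbd
  -- pull-out property
  have hpull : μ[(fun ω => (μ[T₁|MeasurableSpace.comap S ⊤]) ω * T₁ ω)|MeasurableSpace.comap S ⊤]
      =ᵐ[μ] fun ω => (μ[T₁|MeasurableSpace.comap S ⊤]) ω * (μ[T₁|MeasurableSpace.comap S ⊤]) ω :=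
    condExp_mul_of_stronglyMeasurable_left stronglyMeasurable_condExp hYT hint₁
  have hEYT : ∫ ω, (μ[T₁|MeasurableSpace.comap S ⊤]) ω * T₁ ω ∂μ = ∫ ω, (μ[T₁|MeasurableSpace.comap S ⊤]) ω * (μ[T₁|MeasurableSpace.comap S ⊤]) ω ∂μ := by
    rw [← integral_condExp hm (f := fun ω => (μ[T₁|MeasurableSpace.comap S ⊤]) ω * T₁ ω)]
    exact integral_congr_ae hpull
  -- conditional variance integral
  have hV : ∫ ω, condVarFn (MeasurableSpace.comap S ⊤) μ T₁ ω ∂μ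
      = ∫ ω, (T₁ ω - (μ[T₁|MeasurableSpace.comap S ⊤]) ω) ^ 2 ∂μ := by
    rw [condVarFn]
    exact integral_condExp hm
  have hsq : ∫ ω, (T₁ ω - (μ[T₁|MeasurableSpace.comap S ⊤]) ω) ^ 2 ∂μ
      = ∫ ω, T₁ ω ^ 2 ∂μ - ∫ ω, (μ[T₁|MeasurableSpace.comap S ⊤]) ω * (μ[T₁|MeasurableSpace.comap S ⊤]) ω ∂μ := by
    have heq : (fun ω => (T₁ ω - (μ[T₁|MeasurableSpace.comap S ⊤]) ω) ^ 2)
        = fun ω => T₁ ω ^ 2 - (2 * ((μ[T₁|MeasurableSpace.comap S ⊤]) ω * T₁ ω) - (μ[T₁|MeasurableSpace.comap S ⊤]) ω * (μ[T₁|MeasurableSpace.comap S ⊤]) ω) := by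
      funext ω; ring
    have hi1 : Integrable (fun ω => 2 * ((μ[T₁|MeasurableSpace.comap S ⊤]) ω * T₁ ω)) μ := hYT.const_mul 2
    have hi2 : Integrable
        (fun ω => 2 * ((μ[T₁|MeasurableSpace.comap S ⊤]) ω * T₁ ω) - (μ[T₁|MeasurableSpace.comap S ⊤]) ω * (μ[T₁|MeasurableSpace.comap S ⊤]) ω) μ := hi1.sub hYY
    rw [heq, integral_sub hT₁sq hi2, integral_sub hi1 hYY, MeasureTheory.integral_const_mul, hEYT]
    ring
  -- values of the integrals via intS
  have hE2 : ∫ ω, T₂ ω ∂μ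
      = (((N - 1).choose (n - 1) : ℝ) * ∑ j, x j ^ 2) / (N.choose n : ℝ) := by
    rw [← integral_condExp hm (f := T₂), integral_congr_ae hT₂unb,
      intS (fun t => ∑ j ∈ t, x j ^ 2)]
    congr 1
    rw [hP_def, sum_powersetCard_sum n (le_trans one_le_two hn), Fintype.card_fin]
  have hEY2 : ∫ ω, (μ[T₁|MeasurableSpace.comap S ⊤]) ω * (μ[T₁|MeasurableSpace.comap S ⊤]) ω ∂μ
      = (((N - 1).choose (n - 1) : ℝ) * ∑ j, x j ^ 2
          + ((N - 2).choose (n - 2) : ℝ) * ∑ i, ∑ j ∈ univ.erase i, x i * x j)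
        / (N.choose n : ℝ) := by
    have : ∫ ω, (μ[T₁|MeasurableSpace.comap S ⊤]) ω * (μ[T₁|MeasurableSpace.comap S ⊤]) ω ∂μ
        = ∫ ω, (fun t => (∑ j ∈ t, x j) ^ 2) (S ω) ∂μ := by
      refine integral_congr_ae ?_
      filter_upwards [hT₁unb] with ω h
      rw [h]; ring
    rw [this, intS (fun t => (∑ j ∈ t, x j) ^ 2)]
    congr 1
    rw [hP_def, sum_powersetCard_sq n hn, Fintype.card_fin]
  -- LHS split
  have hLHS : ∫ ω, (T₂ ω - T₁ ω ^ 2 / (n : ℝ)) / ((n : ℝ) - 1) ∂μ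
      = (∫ ω, T₂ ω ∂μ - (∫ ω, T₁ ω ^ 2 ∂μ) / (n : ℝ)) / ((n : ℝ) - 1) := by
    rw [integral_div, integral_sub hint₂ (hT₁sq.div_const _), integral_div]
  -- numeric abbreviations
  set A : ℝ := ∑ j, x j ^ 2 with hA_def
  set Sx : ℝ := ∑ j, x j with hSx_def
  set B : ℝ := ∑ i, ∑ j ∈ univ.erase i, x i * x j with hB_def
  set V : ℝ := ∫ ω, condVarFn (MeasurableSpace.comap S ⊤) μ T₁ ω ∂μ with hV_def
  set C : ℝ := (N.choose n : ℝ) with hC_def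
  set c1 : ℝ := ((N - 1).choose (n - 1) : ℝ) with hc1_def
  set c2 : ℝ := ((N - 2).choose (n - 2) : ℝ) with hc2_def
  have hBval : B = Sx ^ 2 - A := by
    rw [hB_def, hSx_def, hA_def]
    have : ∀ i : Fin N, ∑ j ∈ univ.erase i, x i * x j = x i * ((∑ j, x j) - x i) := by
      intro i
      rw [← Finset.mul_sum, Finset.sum_erase_eq_sub (Finset.mem_univ i)]
    rw [Finset.sum_congr rfl fun i _ => this i]
    rw [sq, Finset.sum_mul]
    rw [← Finset.sum_sub_distrib]
    refine Finset.sum_congr rfl fun i _ => ?_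
    ring
  have hNne : (N : ℝ) ≠ 0 := by positivity
  have hN2 : (2 : ℝ) ≤ (N : ℝ) := by exact_mod_cast hN
  have hn2 : (2 : ℝ) ≤ (n : ℝ) := by exact_mod_cast hn
  have hN1ne : (N : ℝ) - 1 ≠ 0 := by nlinarith
  have hnne : (n : ℝ) ≠ 0 := by positivity
  have hn1ne : (n : ℝ) - 1 ≠ 0 := by nlinarith
  have hCneR : C ≠ 0 := by
    rw [hC_def]
    exact_mod_cast hCpos.ne'
  -- choose identities
  have hc1R : (N : ℝ) * c1 = C * n := by
    have h := Nat.add_one_mul_choose_eq (N - 1) (n - 1)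
    have e1 : N - 1 + 1 = N := by omega
    have e2 : n - 1 + 1 = n := by omega
    rw [e1, e2] at h
    rw [hc1_def, hC_def]
    exact_mod_cast h
  have hc2R : ((N : ℝ) - 1) * c2 = c1 * ((n : ℝ) - 1) := by
    have h := Nat.add_one_mul_choose_eq (N - 2) (n - 2)
    have e1 : N - 2 + 1 = N - 1 := by omega
    have e2 : n - 2 + 1 = n - 1 := by omega
    rw [e1, e2] at h
    have h' : ((N - 1 : ℕ) : ℝ) * ((N - 2).choose (n - 2) : ℝ)
        = ((N - 1).choose (n - 1) : ℝ) * ((n - 1 : ℕ) : ℝ) := by exact_mod_cast h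
    rw [Nat.cast_sub (by omega : 1 ≤ N), Nat.cast_sub (by omega : 1 ≤ n),
      Nat.cast_one] at h'
    rw [hc1_def, hc2_def]
    exact h'
  have hc1v : c1 = C * n / N := by
    rw [eq_div_iff hNne]
    linarith [hc1R]
  have hc2v : c2 = C * n * ((n : ℝ) - 1) / ((N : ℝ) * ((N : ℝ) - 1)) := by
    have h3 : c2 = c1 * ((n : ℝ) - 1) / ((N : ℝ) - 1) := by
      rw [eq_div_iff hN1ne]
      linarith [hc2R]
    rw [h3, hc1v]
    field_simp
  -- target sum
  have hTS : ∑ j, (x j - Sx / (N : ℝ)) ^ 2 = A - Sx ^ 2 / (N : ℝ) := by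
    have hexp : ∀ j : Fin N, (x j - Sx / (N : ℝ)) ^ 2
        = x j ^ 2 - (2 * (Sx / N)) * x j + (Sx / N) ^ 2 := fun j => by ring
    rw [Finset.sum_congr rfl fun j _ => hexp j, Finset.sum_add_distrib,
      Finset.sum_sub_distrib, ← Finset.mul_sum, Finset.sum_const, Finset.card_univ,
      Fintype.card_fin, nsmul_eq_mul, ← hSx_def, ← hA_def]
    field_simp
    ring
  -- final assembly
  rw [hLHS, hE2]
  have hET1sq : ∫ ω, T₁ ω ^ 2 ∂μ = (c1 * A + c2 * B) / C + V := by
    have := hV.trans hsq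
    rw [hEY2] at this
    linarith [this]
  rw [hET1sq, hTS, hBval, hc1v, hc2v]
  field_simp
  ring
end
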